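/- Assume char F ≠ 2 and let M be the 4×4 matrix (1/2)·[[1,−1,−1,1],[−1,1,−1,1],[−1,−1,1,1],[−1,−1,−1,−1]] acting on V = F^4 (column vectors). Then the linear map θ of V^σ[G^×] = span{v g_i : v ∈ V, i ∈ I} determined by θ(v g_i) = (Mv) g_i is a Lie algebra automorphism satisfying θ^3 = id, and its fixed subalgebra {x ∈ V^σ[G^×] : θ(x) = x} equals span{(a,b,c,0) g_i : a,b,c ∈ F with a+b+c = 0, i ∈ I}. -/

import Mathlib

namespace GGA

noncomputable section

variable (F : Type*) [Field F]

/-- The labelling `g_0, …, g_7` of the eight elements of `G = (ℤ/2ℤ)³`: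
`g_0=(0,0,0), g_1=(1,0,0), g_2=(0,1,0), g_3=(0,0,1), g_4=(1,1,0), g_5=(0,1,1),
g_6=(1,1,1), g_7=(1,0,1)`. -/
def lab : Fin 8 → Fin 3 → ZMod 2 :=
  ![![0, 0, 0], ![1, 0, 0], ![0, 1, 0], ![0, 0, 1],
    ![1, 1, 0], ![0, 1, 1], ![1, 1, 1], ![1, 0, 1]]

/-- `star i j` is the unique index `k ∈ {0,…,7}` with `g_i + g_j = g_k`
(the labelling `lab` is a bijection). -/
def star (i j : Fin 8) : Fin 8 := Function.invFun lab (lab i + lab j)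

/-- The formula for `σ_{i,i+1}(r,s)`. -/
def f1 (r s : Fin 4 → F) : Fin 4 → F :=
  ![-(r 1 * s 0) - r 2 * s 2, -(r 1 * s 2) - r 2 * s 0,
    r 0 * s 1 + r 3 * s 3, r 0 * s 3 + r 3 * s 1]

/-- The formula for `σ_{i,i+2}(r,s)`. -/
def f2 (r s : Fin 4 → F) : Fin 4 → F :=
  ![r 1 * s 2 + r 3 * s 3, -(r 0 * s 0) - r 2 * s 1,
    -(r 0 * s 1) - r 2 * s 0, r 1 * s 3 + r 3 * s 2]

/-- The formula for `σ_{i,i+4}(r,s)`. -/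
def f4 (r s : Fin 4 → F) : Fin 4 → F :=
  ![-(r 0 * s 1) - r 1 * s 2, r 2 * s 0 + r 3 * s 3,
    -(r 0 * s 2) - r 1 * s 1, r 2 * s 3 + r 3 * s 0]

/-- The twist `σ : G × G → Bil(V × V, V)`, `V = F⁴`, written in terms of the indices:
`σ i j r s = σ_{i,j}(r,s)`.  For `i, j ∈ I = {1,…,7}` the value depends on the
difference `j - i (mod 7)`, matching the definition
`σ_{i,i+1}, σ_{i,i+2}, σ_{i,i+4}` explicit, `σ_{0,i}=σ_{i,0}=σ_{0,0}=σ_{i,i}=0`,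
`σ_{i,i+3}(r,s)=-σ_{i,i+4}(s,r)`, `σ_{i,i+5}(r,s)=-σ_{i,i+2}(s,r)`,
`σ_{i,i+6}(r,s)=-σ_{i,i+1}(s,r)`. -/
def sigma (i j : Fin 8) (r s : Fin 4 → F) : Fin 4 → F :=
  if i = 0 ∨ j = 0 ∨ i = j then 0
  else if ((j : ℕ) + 7 - (i : ℕ)) % 7 = 1 then f1 F r s
  else if ((j : ℕ) + 7 - (i : ℕ)) % 7 = 2 then f2 F r s
  else if ((j : ℕ) + 7 - (i : ℕ)) % 7 = 3 then -f4 F s r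
  else if ((j : ℕ) + 7 - (i : ℕ)) % 7 = 4 then f4 F r s
  else if ((j : ℕ) + 7 - (i : ℕ)) % 7 = 5 then -f2 F s r
  else -f1 F s r

/-- `single i r` is the formal sum `r gᵢ` in `V^σ[G]`, viewed as a function `G → V`. -/
def single (i : Fin 8) (r : Fin 4 → F) : Fin 8 → Fin 4 → F :=
  fun k => if k = i then r else 0

/-- The product of `V^σ[G]`: the unique bilinear extension of
`[r gᵢ, s gⱼ] = σ_{i,j}(r,s) g_{i*j}`. -/
def bracket (x y : Fin 8 → Fin 4 → F) : Fin 8 → Fin 4 → F :=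
  fun k => ∑ i : Fin 8, ∑ j : Fin 8, if star i j = k then sigma F i j (x i) (y j) else 0


/-- The subspace `V^σ[G^×]` of `V^σ[G]` spanned by `{v gᵢ : v ∈ V, i ∈ I}`. -/
def VGx : Submodule F (Fin 8 → Fin 4 → F) :=
  Submodule.span F {z : Fin 8 → Fin 4 → F | ∃ i : Fin 8, i ≠ 0 ∧ ∃ r : Fin 4 → F, z = single F i r}

/-- The matrix `M = ½ [[1,−1,−1,1],[−1,1,−1,1],[−1,−1,1,1],[−1,−1,−1,−1]]`. -/
def Mtriality : Matrix (Fin 4) (Fin 4) F :=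
  (2 : F)⁻¹ • !![1, -1, -1, 1; -1, 1, -1, 1; -1, -1, 1, 1; -1, -1, -1, -1]

/-- The triality map `θ(v gᵢ) = (Mv) gᵢ`. -/
def thetaTriality (x : Fin 8 → Fin 4 → F) : Fin 8 → Fin 4 → F :=
  fun i => (Mtriality F).mulVec (x i)

lemma mulVec_expand (v : Fin 4 → F) :
    (Mtriality F).mulVec v = ![2⁻¹*(v 0 - v 1 - v 2 + v 3), 2⁻¹*(-v 0 + v 1 - v 2 + v 3),
      2⁻¹*(-v 0 - v 1 + v 2 + v 3), 2⁻¹*(-v 0 - v 1 - v 2 - v 3)] := by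
  funext k
  fin_cases k <;>
    simp [Mtriality, Matrix.mulVec, dotProduct, Fin.sum_univ_four] <;> ring

lemma Mcube (h2 : (2:F) ≠ 0) (v : Fin 4 → F) :
    (Mtriality F).mulVec ((Mtriality F).mulVec ((Mtriality F).mulVec v)) = v := by
  simp only [mulVec_expand]
  funext k
  fin_cases k <;> (simp; field_simp; ring)

lemma hf1 (h2 : (2:F) ≠ 0) (r s : Fin 4 → F) :
    (Mtriality F).mulVec (f1 F r s)
      = f1 F ((Mtriality F).mulVec r) ((Mtriality F).mulVec s) := by
  simp only [mulVec_expand, f1]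
  funext k
  fin_cases k <;> (simp; field_simp; ring)

lemma hf2 (h2 : (2:F) ≠ 0) (r s : Fin 4 → F) :
    (Mtriality F).mulVec (f2 F r s)
      = f2 F ((Mtriality F).mulVec r) ((Mtriality F).mulVec s) := by
  simp only [mulVec_expand, f2]
  funext k
  fin_cases k <;> (simp; field_simp; ring)

lemma hf4 (h2 : (2:F) ≠ 0) (r s : Fin 4 → F) :
    (Mtriality F).mulVec (f4 F r s)
      = f4 F ((Mtriality F).mulVec r) ((Mtriality F).mulVec s) := by
  simp only [mulVec_expand, f4]
  funext k
  fin_cases k <;> (simp; field_simp; ring)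

lemma sigma_compat (h2 : (2:F) ≠ 0) (i j : Fin 8) (r s : Fin 4 → F) :
    (Mtriality F).mulVec (sigma F i j r s)
      = sigma F i j ((Mtriality F).mulVec r) ((Mtriality F).mulVec s) := by
  unfold sigma
  split_ifs
  · exact Matrix.mulVec_zero _
  · exact hf1 F h2 r s
  · exact hf2 F h2 r s
  · rw [Matrix.mulVec_neg, hf4 F h2 s r]
  · exact hf4 F h2 r s
  · rw [Matrix.mulVec_neg, hf2 F h2 s r]
  · rw [Matrix.mulVec_neg, hf1 F h2 s r]

lemma single_decomp (x : Fin 8 → Fin 4 → F) : x = ∑ i : Fin 8, single F i (x i) := by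
  funext k
  simp [single, Finset.sum_apply, Finset.sum_ite_eq, Finset.sum_ite_eq']

lemma single_zero (i : Fin 8) : single F i (0 : Fin 4 → F) = 0 := by
  funext k; simp [single]

lemma mem_VGx_iff (x : Fin 8 → Fin 4 → F) : x ∈ VGx F ↔ x 0 = 0 := by
  constructor
  · intro hx
    have : VGx F ≤ LinearMap.ker (LinearMap.proj (R := F)
        (φ := fun _ : Fin 8 => Fin 4 → F) 0) := by
      rw [VGx, Submodule.span_le]
      rintro z ⟨i, hi, r, rfl⟩
      simp only [SetLike.mem_coe, LinearMap.mem_ker, LinearMap.proj_apply]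
      show single F i r 0 = 0
      simp only [single]
      exact if_neg fun h => hi h.symm
    simpa using this hx
  · intro hx
    rw [single_decomp F x]
    refine Submodule.sum_mem _ fun i _ => ?_
    by_cases hi : i = 0
    · subst hi; rw [hx, single_zero]; exact Submodule.zero_mem _
    · exact Submodule.subset_span ⟨i, hi, x i, rfl⟩

lemma fixed_of (h2 : (2:F) ≠ 0) (r : Fin 4 → F) (h : r 0 + r 1 + r 2 = 0) (h3 : r 3 = 0) :
    (Mtriality F).mulVec r = r := by
  rw [mulVec_expand]
  funext k
  fin_cases k
  · simp; field_simp; linear_combination -h + h3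
  · simp; field_simp; linear_combination -h + h3
  · simp; field_simp; linear_combination -h + h3
  · simp; field_simp; linear_combination -h - 3*h3

lemma of_fixed (h2 : (2:F) ≠ 0) (r : Fin 4 → F) (h : (Mtriality F).mulVec r = r) :
    r 0 + r 1 + r 2 = 0 ∧ r 3 = 0 := by
  rw [mulVec_expand] at h
  have e0 := congrFun h 0
  have e3 := congrFun h 3
  simp only [Matrix.cons_val_zero, Matrix.cons_val_one, Matrix.head_cons,
    Matrix.cons_val_succ, Matrix.cons_val_three, Matrix.tail_cons] at e0 e3
  have h4 : (4:F) ≠ 0 := by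
    have := mul_ne_zero h2 h2
    norm_num at this
    exact this
  field_simp at e0 e3
  have hr3 : r 3 = 0 := by
    have h43 : (4:F) * r 3 = 0 := by linear_combination e0 - e3
    exact (mul_eq_zero.mp h43).resolve_left h4
  exact ⟨by linear_combination -e0 + hr3, hr3⟩

lemma theta_single (i : Fin 8) (r : Fin 4 → F) :
    thetaTriality F (single F i r) = single F i ((Mtriality F).mulVec r) := by
  funext k
  by_cases h : k = i <;> simp [thetaTriality, single, h, Matrix.mulVec_zero]

lemma bracket_compat (h2 : (2:F) ≠ 0) (x y : Fin 8 → Fin 4 → F) :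
    thetaTriality F (bracket F x y)
      = bracket F (thetaTriality F x) (thetaTriality F y) := by
  funext k
  simp only [thetaTriality, bracket]
  have hsum : ∀ (f : Fin 8 → Fin 4 → F),
      (Mtriality F).mulVec (∑ i : Fin 8, f i) = ∑ i : Fin 8, (Mtriality F).mulVec (f i) := by
    intro f
    simpa only [Matrix.mulVecLin_apply] using map_sum ((Mtriality F).mulVecLin) f Finset.univ
  rw [hsum]
  refine Finset.sum_congr rfl fun i _ => ?_
  rw [hsum]
  refine Finset.sum_congr rfl fun j _ => ?_
  split_ifs
  · exact sigma_compat F h2 i j (x i) (y j)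
  · exact Matrix.mulVec_zero _

/-- The fixed-point subspace as a submodule. -/
def FixSub : Submodule F (Fin 8 → Fin 4 → F) where
  carrier := {x | x 0 = 0 ∧ thetaTriality F x = x}
  zero_mem' := ⟨rfl, by funext i; simp [thetaTriality, Matrix.mulVec_zero]⟩
  add_mem' := by
    rintro a b ⟨ha0, ha⟩ ⟨hb0, hb⟩
    refine ⟨by simp [ha0, hb0], ?_⟩
    funext i
    have ha' : (Mtriality F).mulVec (a i) = a i := congrFun ha i
    have hb' : (Mtriality F).mulVec (b i) = b i := congrFun hb i
    show (Mtriality F).mulVec ((a + b) i) = (a + b) i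
    simp [Matrix.mulVec_add, ha', hb']
  smul_mem' := by
    rintro c a ⟨ha0, ha⟩
    refine ⟨by simp [ha0], ?_⟩
    funext i
    have ha' : (Mtriality F).mulVec (a i) = a i := congrFun ha i
    show (Mtriality F).mulVec ((c • a) i) = (c • a) i
    simp [Matrix.mulVec_smul, ha']

/-- **Statement 14.** (char F ≠ 2.)  The map `θ(v gᵢ) = (Mv) gᵢ` of `V^σ[G^×]` is a Lie
algebra automorphism with `θ³ = id`, whose fixed subalgebra is
`span{(a,b,c,0) gᵢ : a+b+c = 0, i ∈ I}`. -/
theorem triality_automorphism (h2 : (2 : F) ≠ 0) :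
    (∀ x ∈ VGx F, thetaTriality F x ∈ VGx F) ∧
    Set.BijOn (thetaTriality F) ↑(VGx F) ↑(VGx F) ∧
    (∀ x ∈ VGx F, ∀ y ∈ VGx F,
      thetaTriality F (bracket F x y) = bracket F (thetaTriality F x) (thetaTriality F y)) ∧
    (∀ x ∈ VGx F, thetaTriality F (thetaTriality F (thetaTriality F x)) = x) ∧
    {x : Fin 8 → Fin 4 → F | x ∈ VGx F ∧ thetaTriality F x = x}
      = ↑(Submodule.span F
          {z : Fin 8 → Fin 4 → F | ∃ i : Fin 8, i ≠ 0 ∧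
            ∃ r : Fin 4 → F, r 0 + r 1 + r 2 = 0 ∧ r 3 = 0 ∧ z = single F i r}) := by
  have theta3 : ∀ x : Fin 8 → Fin 4 → F,
      thetaTriality F (thetaTriality F (thetaTriality F x)) = x := by
    intro x; funext i; exact Mcube F h2 (x i)
  have maps : ∀ x ∈ VGx F, thetaTriality F x ∈ VGx F := by
    intro x hx
    rw [mem_VGx_iff] at hx ⊢
    show (Mtriality F).mulVec (x 0) = 0
    rw [hx, Matrix.mulVec_zero]
  refine ⟨maps, ⟨fun x hx => maps x hx, ?_, ?_⟩,
    fun x _ y _ => bracket_compat F h2 x y, fun x _ => theta3 x, ?_⟩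
  · intro a _ b _ hab
    have h' := congrArg (fun z => thetaTriality F (thetaTriality F z)) hab
    rw [theta3 a, theta3 b] at h'
    exact h'
  · intro y hy
    exact ⟨thetaTriality F (thetaTriality F y), maps _ (maps _ hy), theta3 y⟩
  · ext x
    simp only [Set.mem_setOf_eq, SetLike.mem_coe]
    constructor
    · rintro ⟨hx, hfix⟩
      rw [mem_VGx_iff] at hx
      rw [single_decomp F x]
      refine Submodule.sum_mem _ fun i _ => ?_
      by_cases hi : i = 0
      · subst hi; rw [hx, single_zero]; exact Submodule.zero_mem _
      · have hfi : (Mtriality F).mulVec (x i) = x i := congrFun hfix i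
        obtain ⟨hsum, h3⟩ := of_fixed F h2 (x i) hfi
        exact Submodule.subset_span ⟨i, hi, x i, hsum, h3, rfl⟩
    · intro hx
      have hle : Submodule.span F {z : Fin 8 → Fin 4 → F | ∃ i : Fin 8, i ≠ 0 ∧
          ∃ r : Fin 4 → F, r 0 + r 1 + r 2 = 0 ∧ r 3 = 0 ∧ z = single F i r} ≤ FixSub F := by
        rw [Submodule.span_le]
        rintro z ⟨i, hi, r, hsum, h3, rfl⟩
        refine ⟨?_, ?_⟩
        · show single F i r 0 = 0
          simp only [single]
          exact if_neg fun h => hi h.symm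
        · rw [theta_single, fixed_of F h2 r hsum h3]
      have hmem := hle hx
      exact ⟨(mem_VGx_iff F x).mpr hmem.1, hmem.2⟩

end
end GGA
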